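/- Let n ≥ 1. The number of reachable states (S, δ) on V = {1, …, n} is at most n · C(2n−1, n), where C denotes the binomial coefficient. -/

import Mathlib

/-- `lastRmvd S = max ({0, 1, …, n} ∖ S)`. -/
def lastRmvd (n : ℕ) (S : Finset ℕ) : ℕ := ((Finset.range (n + 1)) \ S).sup id

/-- `bad (S, δ) = {v ∈ S : v < lastRmvd S ∧ δ v = 0}`. -/
def badSet (n : ℕ) (S : Finset ℕ) (δ : ℕ → ℕ) : Finset ℕ :=
  S.filter (fun v => v < lastRmvd n S ∧ δ v = 0)

/-- A reachable state on `V = {1, …, n}`: a pair `(S, δ)` with `S ⊆ V`, `1 ∈ S`,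
`δ v = 0` for `v ∉ S`, `δ 1 ≥ 1`, `∑_{v ∈ S} δ v = |S| − 1` and `|bad (S, δ)| ≤ 1`. -/
def ReachableState (n : ℕ) (S : Finset ℕ) (δ : ℕ → ℕ) : Prop :=
  S ⊆ Finset.Icc 1 n ∧ 1 ∈ S ∧ (∀ v : ℕ, v ∉ S → δ v = 0) ∧
  1 ≤ δ 1 ∧ (∑ v ∈ S, δ v) = S.card - 1 ∧ (badSet n S δ).card ≤ 1

namespace CountAux

/-- the distinguished "bad" vertex (or 1 if none). -/
def bfun (n : ℕ) (S : Finset ℕ) (δ : ℕ → ℕ) : ℕ := max ((badSet n S δ).sup id) 1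

variable {n : ℕ} {S : Finset ℕ} {δ : ℕ → ℕ}

lemma eq_bfun_of_mem_bad (h : ReachableState n S δ) {v : ℕ}
    (hv : v ∈ badSet n S δ) : v = bfun n S δ := by
  have hcard := h.2.2.2.2.2
  have hall : ∀ a ∈ badSet n S δ, ∀ b ∈ badSet n S δ, a = b :=
    Finset.card_le_one.mp hcard
  have hsup : (badSet n S δ).sup id = v := by
    apply le_antisymm
    · exact Finset.sup_le fun w hw => le_of_eq (hall w hw v hv)
    · exact Finset.le_sup (f := id) hv
  have hv1 : 1 ≤ v := (Finset.mem_Icc.mp (h.1 (Finset.mem_filter.mp hv).1)).1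
  simp [bfun, hsup, Nat.max_eq_left hv1]

lemma bfun_mem (h : ReachableState n S δ) : bfun n S δ ∈ S := by
  rcases (badSet n S δ).eq_empty_or_nonempty with he | ⟨v, hv⟩
  · simp [bfun, he]; exact h.2.1
  · rw [← eq_bfun_of_mem_bad h hv]; exact (Finset.mem_filter.mp hv).1

lemma bfun_le (_hn : 1 ≤ n) (h : ReachableState n S δ) : bfun n S δ ≤ n :=
  (Finset.mem_Icc.mp (h.1 (bfun_mem h))).2

lemma lastRmvd_not_mem (h : ReachableState n S δ) : lastRmvd n S ∉ S := by
  have h0 : (0 : ℕ) ∈ Finset.range (n + 1) \ S := by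
    simp only [Finset.mem_sdiff, Finset.mem_range]
    refine ⟨Nat.succ_pos n, fun h0 => ?_⟩
    have := Finset.mem_Icc.mp (h.1 h0)
    omega
  obtain ⟨b, hb, hbe⟩ := Finset.exists_mem_eq_sup _ ⟨0, h0⟩ (id : ℕ → ℕ)
  rw [lastRmvd, hbe]
  exact (Finset.mem_sdiff.mp hb).2

lemma sum_Icc_eq (h : ReachableState n S δ) :
    ∑ v ∈ Finset.Icc 1 n, δ v = S.card - 1 := by
  rw [← h.2.2.2.2.1]
  exact (Finset.sum_subset h.1 (fun x _ hx => h.2.2.1 x hx)).symm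

lemma key (hS : ReachableState n S δ) {S' : Finset ℕ} (hS' : ReachableState n S' δ)
    (hb : bfun n S δ = bfun n S' δ) : S = S' := by
  have hcard : S.card = S'.card := by
    have c1 : 1 ≤ S.card := Finset.card_pos.mpr ⟨1, hS.2.1⟩
    have c2 : 1 ≤ S'.card := Finset.card_pos.mpr ⟨1, hS'.2.1⟩
    have e1 := sum_Icc_eq hS
    have e2 := sum_Icc_eq hS'
    omega
  by_contra hne
  -- asymmetric step
  have step : ∀ (A B : Finset ℕ), ReachableState n A δ → ReachableState n B δ →
      bfun n A δ = bfun n B δ → ∀ v ∈ A, v ∉ B → lastRmvd n A < v ∧ v ≤ lastRmvd n B := by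
    intro A B hA hB hAB v hvA hvB
    have hδ : δ v = 0 := hB.2.2.1 v hvB
    have hv1 : v ∈ Finset.Icc 1 n := hA.1 hvA
    have hlt : ¬ v < lastRmvd n A := by
      intro hlt
      have hvbad : v ∈ badSet n A δ := Finset.mem_filter.mpr ⟨hvA, hlt, hδ⟩
      have : v = bfun n A δ := eq_bfun_of_mem_bad hA hvbad
      rw [this, hAB] at hvB
      exact hvB (bfun_mem hB)
    have hneq : v ≠ lastRmvd n A := fun he => lastRmvd_not_mem hA (he ▸ hvA)
    constructor
    · omega
    · refine Finset.le_sup (f := id) ?_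
      simp only [Finset.mem_sdiff, Finset.mem_range]
      have := Finset.mem_Icc.mp hv1
      exact ⟨by omega, hvB⟩
  obtain ⟨v, hv⟩ : (S \ S').Nonempty := by
    rw [Finset.sdiff_nonempty]
    intro hsub
    exact hne (Finset.eq_of_subset_of_card_le hsub (le_of_eq hcard.symm))
  obtain ⟨w, hw⟩ : (S' \ S).Nonempty := by
    rw [Finset.sdiff_nonempty]
    intro hsub
    exact hne (Finset.eq_of_subset_of_card_le hsub (le_of_eq hcard)).symm
  obtain ⟨hv1, hv2⟩ := Finset.mem_sdiff.mp hv
  obtain ⟨hw1, hw2⟩ := Finset.mem_sdiff.mp hw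
  have t1 := step S S' hS hS' hb v hv1 hv2
  have t2 := step S' S hS' hS hb.symm w hw1 hw2
  omega

end CountAux

namespace CountAux

/-- the padded digit function recording `δ` on `[1,n]` plus a slack coordinate. -/
def cfun (n : ℕ) (δ : ℕ → ℕ) : Fin (n + 1) → ℕ := fun i =>
  if (i : ℕ) < n then δ ((i : ℕ) + 1) else n - 1 - ∑ v ∈ Finset.Icc 1 n, δ v

variable {n : ℕ} {S : Finset ℕ} {δ : ℕ → ℕ}

lemma sum_Icc_le (h : ReachableState n S δ) :
    ∑ v ∈ Finset.Icc 1 n, δ v ≤ n - 1 := by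
  rw [sum_Icc_eq h]
  have : S.card ≤ n := by
    have := Finset.card_le_card h.1
    simpa [Nat.card_Icc] using this
  omega

lemma sum_cfun (hn : 1 ≤ n) (h : ReachableState n S δ) :
    ∑ i : Fin (n + 1), cfun n δ i = n - 1 := by
  rw [Fin.sum_univ_castSucc]
  have h1 : ∀ i : Fin n, cfun n δ i.castSucc = δ ((i : ℕ) + 1) := by
    intro i; simp [cfun, i.isLt]
  have h2 : cfun n δ (Fin.last n) = n - 1 - ∑ v ∈ Finset.Icc 1 n, δ v := by
    simp [cfun]
  rw [h2, Finset.sum_congr rfl fun i _ => h1 i]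
  have h3 : ∑ i : Fin n, δ ((i : ℕ) + 1) = ∑ v ∈ Finset.Icc 1 n, δ v := by
    rw [Fin.sum_univ_eq_sum_range (fun j => δ (j + 1)) n]
    have : Finset.Icc 1 n = Finset.Ico 1 (n + 1) := by
      ext x; simp [Nat.lt_succ_iff]
    rw [this, Finset.sum_Ico_eq_sum_range]
    simp [Nat.add_comm]
  rw [h3]
  have := sum_Icc_le h
  omega

/-- the multiset encoding of `cfun`. -/
def mfun (n : ℕ) (δ : ℕ → ℕ) : Multiset (Fin (n + 1)) :=
  ∑ i : Fin (n + 1), Multiset.replicate (cfun n δ i) i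

lemma card_mfun (hn : 1 ≤ n) (h : ReachableState n S δ) :
    Multiset.card (mfun n δ) = n - 1 := by
  rw [mfun, ← sum_cfun hn h]
  rw [Multiset.card_sum]
  simp [Multiset.card_replicate]

lemma count_mfun (j : Fin (n + 1)) : (mfun n δ).count j = cfun n δ j := by
  rw [mfun, Multiset.count_sum']
  simp [Multiset.count_replicate]

end CountAux

open CountAux in
/-- For `n ≥ 1`, the number of reachable states on `V = {1, …, n}` is at
most `n · C(2n−1, n)`. -/
theorem count_reachable_states (n : ℕ) (hn : 1 ≤ n) :
    Nat.card {x : Finset ℕ × (ℕ → ℕ) // ReachableState n x.1 x.2}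
      ≤ n * Nat.choose (2 * n - 1) n := by
  classical
  set T := Fin n × Sym (Fin (n + 1)) (n - 1) with hT
  have hb1 : ∀ (S : Finset ℕ) (δ : ℕ → ℕ), 1 ≤ bfun n S δ := fun S δ => le_max_right _ _
  let F : {x : Finset ℕ × (ℕ → ℕ) // ReachableState n x.1 x.2} → T := fun x =>
    (⟨bfun n x.1.1 x.1.2 - 1, by
        have h1 := bfun_le hn x.2
        have h2 := hb1 x.1.1 x.1.2
        omega⟩,
     ⟨mfun n x.1.2, card_mfun hn x.2⟩)
  have hinj : Function.Injective F := by
    rintro ⟨⟨S, δ⟩, hx⟩ ⟨⟨S', δ'⟩, hy⟩ hFeq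
    have hbe : bfun n S δ - 1 = bfun n S' δ' - 1 :=
      congrArg Fin.val (congrArg Prod.fst hFeq)
    have hme : mfun n δ = mfun n δ' :=
      congrArg Subtype.val (congrArg Prod.snd hFeq)
    have hce : ∀ j : Fin (n + 1), cfun n δ j = cfun n δ' j := by
      intro j
      rw [← count_mfun, ← count_mfun, hme]
    have hde : δ = δ' := by
      funext v
      by_cases hv : 1 ≤ v ∧ v ≤ n
      · have hvn : v - 1 < n + 1 := by omega
        have := hce ⟨v - 1, hvn⟩
        simp only [cfun] at this
        have hlt : v - 1 < n := by omega
        rw [if_pos hlt, if_pos hlt] at this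
        have hv1 : v - 1 + 1 = v := by omega
        rwa [hv1] at this
      · have h1 : v ∉ S := fun hm => hv (Finset.mem_Icc.mp (hx.1 hm))
        have h2 : v ∉ S' := fun hm => hv (Finset.mem_Icc.mp (hy.1 hm))
        exact (hx.2.2.1 v h1).trans (hy.2.2.1 v h2).symm
    subst hde
    have hbeq : bfun n S δ = bfun n S' δ := by
      have := hb1 S δ
      have := hb1 S' δ
      omega
    have hSe : S = S' := key hx hy hbeq
    simp [hSe]
  have hcardT : Nat.card T = n * Nat.choose (2 * n - 1) n := by
    rw [hT, Nat.card_eq_fintype_card, Fintype.card_prod, Fintype.card_fin,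
      Sym.card_sym_eq_choose, Fintype.card_fin]
    congr 1
    have h1 : n + 1 + (n - 1) - 1 = 2 * n - 1 := by omega
    rw [h1]
    have h2 : n - 1 = 2 * n - 1 - n := by omega
    rw [h2, Nat.choose_symm (by omega)]
  calc Nat.card {x : Finset ℕ × (ℕ → ℕ) // ReachableState n x.1 x.2}
      ≤ Nat.card T := Nat.card_le_card_of_injective F hinj
    _ = n * Nat.choose (2 * n - 1) n := hcardT
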